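/- arXiv:1708.04296 — 7 statements merged into one kernel-verified Lean document; each statement's English description precedes it below -/
import Mathlib

section
/- Let Ω be a 6-element set with a fixed-point-free involution e ↦ -e, and let M be a permutation of Ω satisfying (i) M(e) = e' implies M(-e') = -e, and (ii) M(e) ≠ -e for all e ∈ Ω. Then every cycle of M has length at most 3. -/
/-- Let `Ω` be a 6-element set with a fixed-point-free involution `neg` and let
`M` be a permutation of `Ω` satisfying `M(e) = e' → M(-e') = -e` and `M(e) ≠ -e`.
Then every cycle of `M` has length at most 3 (the cycle of `x` is `M.cycleOf x`;
its length is the cardinality of its support). -/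
theorem stmt_2 {Ω : Type*} [Fintype Ω] [DecidableEq Ω]
    (hcard : Fintype.card Ω = 6)
    (neg : Ω → Ω) (hinv : Function.Involutive neg) (hfpf : ∀ e, neg e ≠ e)
    (M : Equiv.Perm Ω)
    (h1 : ∀ e, M (neg (M e)) = neg e) (h2 : ∀ e, M e ≠ neg e) :
    ∀ x, (M.cycleOf x).support.card ≤ 3 := by
  have hMneg : ∀ y, neg (M y) = M⁻¹ (neg y) := by
    intro y
    have := h1 y
    calc neg (M y) = M⁻¹ (M (neg (M y))) := by simp
      _ = M⁻¹ (neg y) := by rw [h1]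
  have hMinvneg : ∀ y, neg (M⁻¹ y) = M (neg y) := by
    intro y
    have := h1 (M⁻¹ y)
    simp only [Equiv.Perm.coe_inv, Equiv.apply_symm_apply] at this
    exact this.symm
  have key : ∀ (n : ℤ) (y : Ω), neg ((M ^ n) y) = (M ^ (-n)) (neg y) := by
    intro n
    induction n using Int.induction_on with
    | zero => simp
    | succ k ih =>
      intro y
      have e1 : (M ^ ((k : ℤ) + 1)) y = (M ^ (k : ℤ)) (M y) := by
        rw [zpow_add_one, Equiv.Perm.mul_apply]
      have e2 : (M ^ (-((k : ℤ) + 1))) (neg y) = (M ^ (-(k : ℤ))) (M⁻¹ (neg y)) := by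
        have : (M ^ (-((k : ℤ) + 1))) = (M ^ (-(k : ℤ))) * M⁻¹ := by
          rw [← zpow_neg_one, ← zpow_add]; ring_nf
        rw [this, Equiv.Perm.mul_apply]
      rw [e1, ih (M y), hMneg, e2]
    | pred k ih =>
      intro y
      have e1 : (M ^ (-(k : ℤ) - 1)) y = (M ^ (-(k : ℤ))) (M⁻¹ y) := by
        have : (M ^ (-(k : ℤ) - 1)) = (M ^ (-(k : ℤ))) * M⁻¹ := by
          rw [← zpow_neg_one, ← zpow_add]; ring_nf
        rw [this, Equiv.Perm.mul_apply]
      have e2 : (M ^ (-(-(k : ℤ) - 1))) (neg y) = (M ^ ((k : ℤ))) (M (neg y)) := by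
        have : (M ^ (-(-(k : ℤ) - 1))) = (M ^ ((k : ℤ))) * M := by group
        rw [this, Equiv.Perm.mul_apply]
      simp only [neg_neg] at ih
      rw [e1, ih (M⁻¹ y), hMinvneg, e2]
  -- neg x is never in the cycle of x
  have noA : ∀ x, ¬ M.SameCycle x (neg x) := by
    rintro x ⟨j, hj⟩
    rcases Int.even_or_odd j with ⟨m, hm⟩ | ⟨m, hm⟩
    · apply hfpf ((M ^ m) x)
      calc neg ((M ^ m) x) = (M ^ (-m)) (neg x) := key m x
        _ = (M ^ (-m)) ((M ^ j) x) := by rw [hj]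
        _ = (M ^ (-m + j)) x := by rw [zpow_add, Equiv.Perm.mul_apply]
        _ = (M ^ m) x := by
            have hexp : -m + j = m := by omega
            rw [hexp]
    · apply h2 ((M ^ m) x)
      calc M ((M ^ m) x) = (M ^ (1 + m)) x := by
            rw [zpow_add, zpow_one, Equiv.Perm.mul_apply]
        _ = (M ^ (-m + j)) x := by
            have hexp : (1 : ℤ) + m = -m + j := by omega
            rw [hexp]
        _ = (M ^ (-m)) ((M ^ j) x) := by rw [zpow_add, Equiv.Perm.mul_apply]
        _ = (M ^ (-m)) (neg x) := by rw [hj]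
        _ = neg ((M ^ m) x) := (key m x).symm
  have hsc : ∀ x y, M.SameCycle x y → M.SameCycle (neg x) (neg y) := by
    rintro x y ⟨n, hn⟩
    exact ⟨-n, by rw [← key, hn]⟩
  intro x
  by_contra hcon
  push_neg at hcon
  have h4 : 4 ≤ (M.cycleOf x).support.card := hcon
  -- x is in the support of M
  have hxsupp : x ∈ M.support := by
    by_contra hx
    have hx' : M x = x := by simpa [Equiv.Perm.mem_support] using hx
    have hone : M.cycleOf x = 1 := by
      rw [Equiv.Perm.cycleOf_eq_one_iff]; exact hx'
    rw [hone] at h4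
    simp at h4
  have hnxsupp : neg x ∈ M.support := by
    rw [Equiv.Perm.mem_support] at hxsupp ⊢
    intro hc
    apply hxsupp
    have hkey := hMneg (neg x)
    rw [hc, hinv x] at hkey
    -- hkey : x = M⁻¹ x
    conv_lhs => rw [hkey]
    simp
  -- supports of the two cycles are disjoint
  have hdisj : Disjoint (M.cycleOf x).support (M.cycleOf (neg x)).support := by
    rw [Finset.disjoint_left]
    intro y hy hy'
    rw [Equiv.Perm.mem_support_cycleOf_iff] at hy hy'
    exact noA x (hy.1.trans hy'.1.symm)
  -- the cycle of neg x is at least as big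
  have hle : (M.cycleOf x).support.card ≤ (M.cycleOf (neg x)).support.card := by
    apply Finset.card_le_card_of_injOn neg
    · intro y hy
      rw [Finset.mem_coe, Equiv.Perm.mem_support_cycleOf_iff] at hy ⊢
      exact ⟨hsc x y hy.1, hnxsupp⟩
    · intro a _ b _ hab
      exact hinv.injective hab
  have htotal : (M.cycleOf x).support.card + (M.cycleOf (neg x)).support.card ≤ 6 := by
    rw [← Finset.card_union_of_disjoint hdisj, ← hcard]
    exact Finset.card_le_univ _
  omega
end

section
/- Let Ω = {e₁,e₂,e₃,-e₁,-e₂,-e₃} be a 6-element set with a fixed-point-free involution, and let D = (e₁,e₂,e₃)(-e₃,-e₂,-e₁). Let M be a permutation of Ω satisfying (i) M(e) = e' implies M(-e') = -e, and (ii) M(e) ≠ -e for all e. Then M is one of exactly seven permutations: (M1) the identity; (M2) D; (M3) (-f₁,f₂,f₃)(-f₃,-f₂,f₁) where (f₁,f₂,f₃) is one of the two 3-cycles composing D; (M4) (f₁,-f₂)(f₂,-f₁) with f₃,-f₃ fixed, where (f₁,f₂,f₃) is a 3-cycle of D; (M5) D⁻¹; (M6) (-f₁,f₂,f₃)(-f₃,-f₂,f₁)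 where (f₁,f₂,f₃) is one of the two 3-cycles composing D⁻¹; (M7) (f₁,f₂)(-f₁,-f₂) with f₃,-f₃ fixed, where (f₁,f₂,f₃) is a 3-cycle of D. -/
/-- The set of oriented edges of a triangle: `(i, true)` is `eᵢ`, `(i, false)` is `-eᵢ`. -/
abbrev Ω : Type := ZMod 3 × Bool

/-- The orientation-reversing involution `e ↦ -e`. -/
def neg (x : Ω) : Ω := (x.1, !x.2)

/-- The rotation `D = (e₁,e₂,e₃)(-e₃,-e₂,-e₁)`. -/
def D : Equiv.Perm Ω where
  toFun x := if x.2 then (x.1 + 1, true) else (x.1 - 1, false)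
  invFun x := if x.2 then (x.1 - 1, true) else (x.1 + 1, false)
  left_inv := by decide
  right_inv := by decide

/-- `eᵢ` for `i = 1, 2, 3` (indices taken mod 3, so `e₃ = ed 0`). -/
def ed (i : ZMod 3) : Ω := (i, true)

/-- `(f₁,f₂,f₃)` is a 3-cycle of the permutation `σ`. -/
def IsCycleOf (σ : Equiv.Perm Ω) (f₁ f₂ f₃ : Ω) : Prop :=
  σ f₁ = f₂ ∧ σ f₂ = f₃ ∧ σ f₃ = f₁ ∧ f₁ ≠ f₂ ∧ f₂ ≠ f₃ ∧ f₁ ≠ f₃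

/-- `M = (-f₁,f₂,f₃)(-f₃,-f₂,f₁)`. -/
def M3form (M : Equiv.Perm Ω) (f₁ f₂ f₃ : Ω) : Prop :=
  M (neg f₁) = f₂ ∧ M f₂ = f₃ ∧ M f₃ = neg f₁ ∧
  M (neg f₃) = neg f₂ ∧ M (neg f₂) = f₁ ∧ M f₁ = neg f₃

/-- `M = (f₁,-f₂)(f₂,-f₁)` with `f₃, -f₃` fixed. -/
def M4form (M : Equiv.Perm Ω) (f₁ f₂ f₃ : Ω) : Prop :=
  M f₁ = neg f₂ ∧ M (neg f₂) = f₁ ∧ M f₂ = neg f₁ ∧ M (neg f₁) = f₂ ∧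
  M f₃ = f₃ ∧ M (neg f₃) = neg f₃

/-- `M = (f₁,f₂)(-f₁,-f₂)` with `f₃, -f₃` fixed. -/
def M7form (M : Equiv.Perm Ω) (f₁ f₂ f₃ : Ω) : Prop :=
  M f₁ = f₂ ∧ M f₂ = f₁ ∧ M (neg f₁) = neg f₂ ∧ M (neg f₂) = neg f₁ ∧
  M f₃ = f₃ ∧ M (neg f₃) = neg f₃

def M3type (M : Equiv.Perm Ω) : Prop := ∃ f₁ f₂ f₃, IsCycleOf D f₁ f₂ f₃ ∧ M3form M f₁ f₂ f₃
def M6type (M : Equiv.Perm Ω) : Prop := ∃ f₁ f₂ f₃, IsCycleOf D⁻¹ f₁ f₂ f₃ ∧ M3form M f₁ f₂ f₃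
def M4type (M : Equiv.Perm Ω) : Prop := ∃ f₁ f₂ f₃, IsCycleOf D f₁ f₂ f₃ ∧ M4form M f₁ f₂ f₃
def M7type (M : Equiv.Perm Ω) : Prop := ∃ f₁ f₂ f₃, IsCycleOf D f₁ f₂ f₃ ∧ M7form M f₁ f₂ f₃

/-- The two conditions satisfied by every z-monodromy:
`M(e) = e' → M(-e') = -e`, and `M(e) ≠ -e`. -/
def Cond (M : Equiv.Perm Ω) : Prop :=
  (∀ e, M (neg (M e)) = neg e) ∧ (∀ e, M e ≠ neg e)

/-- `σ` is a product of two distinct commuting 3-cycles, i.e. has cycle type (3,3). -/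
def Two3 (σ : Equiv.Perm Ω) : Prop := σ.cycleType = {3, 3}

/-- The 3-cycle `(a,b,c)` as a permutation. -/
def cyc (a b c : Ω) : Equiv.Perm Ω := Equiv.swap a b * Equiv.swap b c

set_option maxRecDepth 4000000 in
set_option synthInstance.maxHeartbeats 2000000 in
set_option synthInstance.maxSize 5000 in
set_option maxHeartbeats 4000000 in
/-- Classification of z-monodromies: every permutation `M` of `Ω` satisfying
`M(e) = e′ → M(-e′) = -e` and `M(e) ≠ -e` is of one of the seven types
(M1)–(M7). -/
theorem stmt_3 (M : Equiv.Perm Ω) (hM : Cond M) :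
    M = 1 ∨ M = D ∨ M3type M ∨ M4type M ∨ M = D⁻¹ ∨ M6type M ∨ M7type M := by
  revert hM; revert M
  unfold Cond M3type M4type M6type M7type M3form M4form M7form IsCycleOf
  decide
end

section
/- With Ω and D = (e₁,e₂,e₃)(-e₃,-e₂,-e₁) as above, the composition D∘M is a product of two distinct commuting 3-cycles on Ω if and only if M is of one of the types (M1) identity, (M2) M = D, (M3) M = (-f₁,f₂,f₃)(-f₃,-f₂,f₁) for a 3-cycle (f₁,f₂,f₃) of D, or (M4) M = (f₁,-f₂)(f₂,-f₁) for a 3-cycle (f₁,f₂,f₃) of D; and it fails for the types (M5) M = D⁻¹, (M6), and (M7). -/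
set_option maxHeartbeats 10000000
set_option maxRecDepth 10000
set_option synthInstance.maxHeartbeats 1000000
set_option synthInstance.maxSize 2000

instance (σ : Equiv.Perm Ω) (a b c : Ω) : Decidable (IsCycleOf σ a b c) := by unfold IsCycleOf; infer_instance
instance (M : Equiv.Perm Ω) (a b c : Ω) : Decidable (M3form M a b c) := by unfold M3form; infer_instance
instance (M : Equiv.Perm Ω) (a b c : Ω) : Decidable (M4form M a b c) := by unfold M4form; infer_instance
instance (M : Equiv.Perm Ω) (a b c : Ω) : Decidable (M7form M a b c) := by unfold M7form; infer_instance
instance (M : Equiv.Perm Ω) : Decidable (M3type M) := by unfold M3type; infer_instance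
instance (M : Equiv.Perm Ω) : Decidable (M6type M) := by unfold M6type; infer_instance
instance (M : Equiv.Perm Ω) : Decidable (M4type M) := by unfold M4type; infer_instance
instance (M : Equiv.Perm Ω) : Decidable (M7type M) := by unfold M7type; infer_instance
instance (M : Equiv.Perm Ω) : Decidable (Cond M) := by unfold Cond; infer_instance

lemma two3_char (σ : Equiv.Perm Ω) :
    Two3 σ ↔ (σ ^ 3 = 1 ∧ ∀ x, σ x ≠ x) := by
  unfold Two3
  constructor
  · intro h
    constructor
    · have : orderOf σ = 3 := by
        rw [← Equiv.Perm.lcm_cycleType, h]; decide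
      rw [← this]; exact pow_orderOf_eq_one σ
    · intro x hx
      have hs : σ.support.card = 6 := by
        rw [← Equiv.Perm.sum_cycleType, h]; decide
      have : σ.support = Finset.univ := by
        apply Finset.eq_univ_of_card; rw [hs]; decide
      have hx' : x ∈ σ.support := this ▸ Finset.mem_univ x
      exact (Equiv.Perm.mem_support.mp hx') hx
  · rintro ⟨h3, hfix⟩
    have hdvd : orderOf σ ∣ 3 := orderOf_dvd_of_pow_eq_one h3
    have hall : ∀ n ∈ σ.cycleType, n = 3 := by
      intro n hn
      have h2 := Equiv.Perm.two_le_of_mem_cycleType hn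
      have hd : n ∣ 3 := (Equiv.Perm.dvd_of_mem_cycleType hn).trans hdvd
      have hle : n ≤ 3 := Nat.le_of_dvd (by norm_num) hd
      interval_cases n
      · exact absurd hd (by decide)
      · rfl
    have hsum : σ.cycleType.sum = 6 := by
      rw [Equiv.Perm.sum_cycleType]
      have : σ.support = Finset.univ := by
        ext x; simp [Equiv.Perm.mem_support, hfix x]
      rw [this]; decide
    have hrep : σ.cycleType = Multiset.replicate (Multiset.card σ.cycleType) 3 :=
      Multiset.eq_replicate_card.mpr hall
    have hcard : Multiset.card σ.cycleType = 2 := by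
      have := hsum
      rw [hrep, Multiset.sum_replicate, smul_eq_mul] at this
      omega
    rw [hrep, hcard]; rfl

lemma key : ∀ M : Equiv.Perm Ω, Cond M →
    ((((D*M)^3 = 1 ∧ ∀ x, (D*M) x ≠ x) ↔ (M = 1 ∨ M = D ∨ M3type M ∨ M4type M)) ∧
     ((M = D⁻¹ ∨ M6type M ∨ M7type M) → ¬((D*M)^3 = 1 ∧ ∀ x, (D*M) x ≠ x))) := by
  decide

/-- `D ∘ M` is a product of two distinct commuting 3-cycles iff `M` is of type
(M1)–(M4); and it fails for types (M5)–(M7). -/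
theorem stmt_4 (M : Equiv.Perm Ω) (hM : Cond M) :
    (Two3 (D * M) ↔ (M = 1 ∨ M = D ∨ M3type M ∨ M4type M)) ∧
    ((M = D⁻¹ ∨ M6type M ∨ M7type M) → ¬ Two3 (D * M)) := by
  have h := key M hM
  rw [two3_char]
  exact h
end

section
/- Let Ω and D be as above, and suppose M is a permutation of Ω satisfying M(e)=e' ⟹ M(-e')=-e and M(e) ≠ -e. If M contains a 3-cycle, then M is a product of two distinct commuting 3-cycles, and moreover either M ∈ {D, D⁻¹} or M = (-f₁,f₂,f₃)(-f₃,-f₂,f₁) for some 3-cycle (f₁,f₂,f₃) of D or of D⁻¹. -/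
section Aux

def Q0 : Equiv.Perm Ω := cyc ((0,true)) ((1,true)) ((2,false)) * cyc ((0,false)) ((2,true)) ((1,false))
def Q1 : Equiv.Perm Ω := cyc ((0,true)) ((1,true)) ((2,true)) * cyc ((0,false)) ((2,false)) ((1,false))
def Q2 : Equiv.Perm Ω := cyc ((0,true)) ((1,false)) ((2,false)) * cyc ((0,false)) ((2,true)) ((1,true))
def Q3 : Equiv.Perm Ω := cyc ((0,true)) ((1,false)) ((2,true)) * cyc ((0,false)) ((2,false)) ((1,true))
def Q4 : Equiv.Perm Ω := cyc ((0,true)) ((2,true)) ((1,false)) * cyc ((0,false)) ((1,true)) ((2,false))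
def Q5 : Equiv.Perm Ω := cyc ((0,true)) ((2,true)) ((1,true)) * cyc ((0,false)) ((1,false)) ((2,false))
def Q6 : Equiv.Perm Ω := cyc ((0,true)) ((2,false)) ((1,false)) * cyc ((0,false)) ((1,true)) ((2,true))
def Q7 : Equiv.Perm Ω := cyc ((0,true)) ((2,false)) ((1,true)) * cyc ((0,false)) ((1,false)) ((2,true))
def B0 : Equiv.Perm Ω := 1
def B1 : Equiv.Perm Ω := Equiv.swap ((1,true)) ((2,true)) * Equiv.swap ((1,false)) ((2,false))
def B2 : Equiv.Perm Ω := Equiv.swap ((1,true)) ((2,false)) * Equiv.swap ((1,false)) ((2,true))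
def B3 : Equiv.Perm Ω := Equiv.swap ((0,true)) ((1,true)) * Equiv.swap ((0,false)) ((1,false))
def B4 : Equiv.Perm Ω := Equiv.swap ((0,true)) ((1,false)) * Equiv.swap ((0,false)) ((1,true))
def B5 : Equiv.Perm Ω := Equiv.swap ((0,true)) ((2,true)) * Equiv.swap ((0,false)) ((2,false))
def B6 : Equiv.Perm Ω := Equiv.swap ((0,true)) ((2,false)) * Equiv.swap ((0,false)) ((2,true))

set_option synthInstance.maxSize 4000 in
set_option maxRecDepth 100000 in
set_option maxHeartbeats 4000000 in
lemma enum (M : Equiv.Perm Ω) (hM : Cond M) :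
    M = Q0 ∨ M = Q1 ∨ M = Q2 ∨ M = Q3 ∨ M = Q4 ∨ M = Q5 ∨ M = Q6 ∨ M = Q7 ∨
    M = B0 ∨ M = B1 ∨ M = B2 ∨ M = B3 ∨ M = B4 ∨ M = B5 ∨ M = B6 := by
  revert hM; revert M; unfold Cond; decide

lemma isthree (a b c : Ω) (hab : a ≠ b) (hac : a ≠ c) (hbc : b ≠ c) :
    (cyc a b c).cycleType = {3} := by
  have h : List.Nodup [a, b, c] := by simp [hab, hac, hbc]
  have hcard : (cyc a b c).support.card = 3 := by
    unfold cyc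
    rw [Equiv.Perm.support_swap_mul_swap h,
      Finset.card_insert_of_notMem (by simp [hab, hac]),
      Finset.card_insert_of_notMem (by simp [hbc]), Finset.card_singleton]
  exact card_support_eq_three_iff.mp hcard

lemma two3_of {c1 c2 : Equiv.Perm Ω} (h1 : c1.cycleType = {3}) (h2 : c2.cycleType = {3})
    (hd : ∀ x, c1 x = x ∨ c2 x = x) : Two3 (c1 * c2) := by
  have hd' : Equiv.Perm.Disjoint c1 c2 := hd
  unfold Two3
  rw [hd'.cycleType_mul, h1, h2]
  rfl

lemma not3 (M : Equiv.Perm Ω) (h : ∀ x, M (M x) = x) (a : Ω) :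
    (M.cycleOf a).support.card ≠ 3 := by
  have hM2 : M ^ (2 : ℤ) = 1 := by
    rw [zpow_two]
    exact Equiv.ext h
  have key : ∀ j : ℤ, (M ^ j) a = a ∨ (M ^ j) a = M a := by
    intro j
    have hj : M ^ j = M ^ (j % 2) := by
      conv_lhs => rw [← Int.emod_add_mul_ediv j 2]
      rw [zpow_add, zpow_mul, hM2, one_zpow, mul_one]
    rcases Int.emod_two_eq_zero_or_one j with h0 | h0 <;> rw [hj, h0]
    · left; rfl
    · right; rfl
  have hsub : (M.cycleOf a).support ⊆ {a, M a} := by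
    intro b hb
    rw [Equiv.Perm.mem_support_cycleOf_iff] at hb
    obtain ⟨⟨i, hi⟩, -⟩ := hb
    rcases key i with h' | h' <;> rw [h'] at hi <;> simp [← hi]
  have hc := Finset.card_le_card hsub
  have h2 : ({a, M a} : Finset Ω).card ≤ 2 :=
    (Finset.card_insert_le _ _).trans (by simp)
  omega

end Aux

/-- If `M` satisfies the z-monodromy conditions and contains a 3-cycle, then
`M` is a product of two distinct commuting 3-cycles, and moreover either
`M ∈ {D, D⁻¹}` or `M = (-f₁,f₂,f₃)(-f₃,-f₂,f₁)` for some 3-cycle `(f₁,f₂,f₃)`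
of `D` or of `D⁻¹`. -/
theorem stmt_11 (M : Equiv.Perm Ω) (hM : Cond M)
    (h3 : ∃ a, (M.cycleOf a).support.card = 3) :
    Two3 M ∧
    (M = D ∨ M = D⁻¹ ∨
      ∃ f₁ f₂ f₃, (IsCycleOf D f₁ f₂ f₃ ∨ IsCycleOf D⁻¹ f₁ f₂ f₃) ∧
        M3form M f₁ f₂ f₃) := by
  obtain ⟨a, ha⟩ := h3
  rcases enum M hM with rfl | rfl | rfl | rfl | rfl | rfl | rfl | rfl |
    rfl | rfl | rfl | rfl | rfl | rfl | rfl
  · exact ⟨two3_of (isthree _ _ _ (by decide) (by decide) (by decide))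
      (isthree _ _ _ (by decide) (by decide) (by decide)) (by decide),
      Or.inr (Or.inr ⟨((2,false)), ((1,false)), ((0,false)), Or.inl (by unfold IsCycleOf; decide), by unfold M3form; decide⟩)⟩
  · exact ⟨two3_of (isthree _ _ _ (by decide) (by decide) (by decide))
      (isthree _ _ _ (by decide) (by decide) (by decide)) (by decide),
      Or.inl (by decide)⟩
  · exact ⟨two3_of (isthree _ _ _ (by decide) (by decide) (by decide))
      (isthree _ _ _ (by decide) (by decide) (by decide)) (by decide),
      Or.inr (Or.inr ⟨((0,false)), ((1,false)), ((2,false)), Or.inr (by unfold IsCycleOf; decide), by unfold M3form; decide⟩)⟩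
  · exact ⟨two3_of (isthree _ _ _ (by decide) (by decide) (by decide))
      (isthree _ _ _ (by decide) (by decide) (by decide)) (by decide),
      Or.inr (Or.inr ⟨((1,false)), ((0,false)), ((2,false)), Or.inl (by unfold IsCycleOf; decide), by unfold M3form; decide⟩)⟩
  · exact ⟨two3_of (isthree _ _ _ (by decide) (by decide) (by decide))
      (isthree _ _ _ (by decide) (by decide) (by decide)) (by decide),
      Or.inr (Or.inr ⟨((1,false)), ((2,false)), ((0,false)), Or.inr (by unfold IsCycleOf; decide), by unfold M3form; decide⟩)⟩
  · exact ⟨two3_of (isthree _ _ _ (by decide) (by decide) (by decide))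
      (isthree _ _ _ (by decide) (by decide) (by decide)) (by decide),
      Or.inr (Or.inl (by decide))⟩
  · exact ⟨two3_of (isthree _ _ _ (by decide) (by decide) (by decide))
      (isthree _ _ _ (by decide) (by decide) (by decide)) (by decide),
      Or.inr (Or.inr ⟨((0,false)), ((2,false)), ((1,false)), Or.inl (by unfold IsCycleOf; decide), by unfold M3form; decide⟩)⟩
  · exact ⟨two3_of (isthree _ _ _ (by decide) (by decide) (by decide))
      (isthree _ _ _ (by decide) (by decide) (by decide)) (by decide),
      Or.inr (Or.inr ⟨((2,false)), ((0,false)), ((1,false)), Or.inr (by unfold IsCycleOf; decide), by unfold M3form; decide⟩)⟩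
  all_goals exact absurd ha (not3 _ (by decide) a)
end

section
/- Let Ω and D be as above, and suppose M is a permutation of Ω satisfying M(e)=e' ⟹ M(-e')=-e and M(e) ≠ -e. If M is not the identity and has no 3-cycle, then M is a product of two transpositions fixing a pair {f₃,-f₃}, namely M = (f₁,-f₂)(f₂,-f₁) or M = (f₁,f₂)(-f₁,-f₂) for some 3-cycle (f₁,f₂,f₃) of D. -/
lemma bridge (M : Equiv.Perm Ω) (a : Ω) (ha : M a ≠ a) (h3 : M (M (M a)) = a) :
    (M.cycleOf a).support.card = 3 := by
  have hpow : ∀ n : ℕ, (M ^ n) a ∈ ({a, M a, M (M a)} : Finset Ω) := by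
    intro n
    induction n with
    | zero => simp
    | succ n ih =>
      rw [pow_succ', Equiv.Perm.mul_apply]
      simp only [Finset.mem_insert, Finset.mem_singleton] at ih ⊢
      rcases ih with h | h | h <;> rw [h]
      · tauto
      · tauto
      · rw [h3]; tauto
  have hsupp : (M.cycleOf a).support = {a, M a, M (M a)} := by
    ext b
    rw [Equiv.Perm.mem_support_cycleOf_iff]
    constructor
    · rintro ⟨hsc, -⟩
      obtain ⟨i, -, rfl⟩ := hsc.exists_pow_eq'
      exact hpow i
    · intro hb
      refine ⟨?_, Equiv.Perm.mem_support.mpr ha⟩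
      simp only [Finset.mem_insert, Finset.mem_singleton] at hb
      rcases hb with rfl | rfl | rfl
      · exact ⟨0, by simp⟩
      · exact ⟨1, by simp⟩
      · exact ⟨2, by rw [zpow_two, Equiv.Perm.mul_apply]⟩
  rw [hsupp]
  have h1 : a ≠ M a := Ne.symm ha
  have h2 : a ≠ M (M a) := by
    intro h; apply ha; conv_lhs => rw [h]
    rw [h3]
  have h4 : M a ≠ M (M a) := fun h => ha (M.injective h).symm
  rw [Finset.card_insert_of_notMem (by simp [h1, h2]),
      Finset.card_insert_of_notMem (by simp [h4])]
  simp

set_option synthInstance.maxSize 2000 in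
set_option synthInstance.maxHeartbeats 1000000 in
set_option maxRecDepth 10000 in
set_option maxHeartbeats 4000000 in
lemma key_s12 : ∀ M : Equiv.Perm Ω, Cond M → (∃ a, M a ≠ a) →
    (∀ a, ¬(M a ≠ a ∧ M (M (M a)) = a)) →
    ∃ f₁ f₂ f₃, IsCycleOf D f₁ f₂ f₃ ∧
      (M4form M f₁ f₂ f₃ ∨ M7form M f₁ f₂ f₃) := by
  unfold Cond IsCycleOf M4form M7form neg
  decide

set_option synthInstance.maxSize 2000 in
set_option synthInstance.maxHeartbeats 1000000 in
set_option maxRecDepth 10000 in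
set_option maxHeartbeats 4000000 in
/-- If `M` satisfies the z-monodromy conditions, is not the identity and has no
3-cycle, then `M = (f₁,-f₂)(f₂,-f₁)` or `M = (f₁,f₂)(-f₁,-f₂)` for some 3-cycle
`(f₁,f₂,f₃)` of `D`, fixing the pair `{f₃,-f₃}`. -/
theorem stmt_12 (M : Equiv.Perm Ω) (hM : Cond M) (hne : M ≠ 1)
    (hno3 : ∀ a, (M.cycleOf a).support.card ≠ 3) :
    ∃ f₁ f₂ f₃, IsCycleOf D f₁ f₂ f₃ ∧
      (M4form M f₁ f₂ f₃ ∨ M7form M f₁ f₂ f₃) := by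
  apply key_s12 M hM
  · by_contra h
    push_neg at h
    exact hne (Equiv.ext h)
  · rintro a ⟨ha, h3⟩
    exact hno3 a (bridge M a ha h3)
end

section
/- Let Ω and D be as above, and let M and M' both be permutations of type (M3): M = (-f₁,f₂,f₃)(-f₃,-f₂,f₁) and M' = (-f'₁,f'₂,f'₃)(-f'₃,-f'₂,f'₁) for 3-cycles (f₁,f₂,f₃) of D and (f'₁,f'₂,f'₃) of D'. Then for the bijection g : Ω → Ω' with g(fᵢ) = f'ᵢ (extended by g(-e) = -g(e)), the composition g∘M∘g⁻¹∘M' = (M')² is a product of two distinct commuting 3-cycles. -/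
lemma cover_of_cycle (f₁ f₂ f₃ : Ω) (hc : IsCycleOf D f₁ f₂ f₃) :
    ∀ x : Ω, x = f₁ ∨ x = f₂ ∨ x = f₃ ∨ x = neg f₁ ∨ x = neg f₂ ∨ x = neg f₃ := by
  revert hc; revert f₁ f₂ f₃; unfold IsCycleOf; decide

set_option synthInstance.maxSize 2000 in
lemma distinct_of_cycle (f₁ f₂ f₃ : Ω) (hc : IsCycleOf D f₁ f₂ f₃) :
    f₁ ≠ f₂ ∧ f₁ ≠ f₃ ∧ f₂ ≠ f₃ ∧ f₁ ≠ neg f₁ ∧ f₁ ≠ neg f₂ ∧ f₁ ≠ neg f₃ ∧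
    f₂ ≠ neg f₁ ∧ f₂ ≠ neg f₂ ∧ f₂ ≠ neg f₃ ∧ f₃ ≠ neg f₁ ∧ f₃ ≠ neg f₂ ∧ f₃ ≠ neg f₃ ∧
    neg f₁ ≠ neg f₂ ∧ neg f₁ ≠ neg f₃ ∧ neg f₂ ≠ neg f₃ := by
  revert hc; revert f₁ f₂ f₃; unfold IsCycleOf; decide

lemma cyc_fix (p q r x : Ω) (h1 : x ≠ p) (h2 : x ≠ q) (h3 : x ≠ r) : cyc p q r x = x := by
  unfold cyc
  rw [Equiv.Perm.mul_apply, Equiv.swap_apply_of_ne_of_ne h2 h3,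
    Equiv.swap_apply_of_ne_of_ne h1 h2]

lemma cyc_a (p q r : Ω) (hpq : p ≠ q) (hpr : p ≠ r) : cyc p q r p = q := by
  unfold cyc
  rw [Equiv.Perm.mul_apply, Equiv.swap_apply_of_ne_of_ne hpq hpr, Equiv.swap_apply_left]

lemma cyc_b (p q r : Ω) (hrp : r ≠ p) (hrq : r ≠ q) : cyc p q r q = r := by
  unfold cyc
  rw [Equiv.Perm.mul_apply, Equiv.swap_apply_left, Equiv.swap_apply_of_ne_of_ne hrp hrq]

lemma cyc_c (p q r : Ω) : cyc p q r r = p := by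
  unfold cyc
  rw [Equiv.Perm.mul_apply, Equiv.swap_apply_right, Equiv.swap_apply_right]

lemma cyc_alt_aux : ∀ a b c x : Ω, a ≠ b → a ≠ c → b ≠ c →
    cyc a b c x = (Equiv.swap a c * Equiv.swap a b) x := by
  unfold cyc; decide

lemma cyc_threeCycle (p q r : Ω) (hpq : p ≠ q) (hpr : p ≠ r) (hqr : q ≠ r) :
    (cyc p q r).IsThreeCycle := by
  have h := (Equiv.Perm.isThreeCycle_swap_mul_swap_same hpq hpr hqr).inv
  rw [mul_inv_rev, Equiv.swap_inv, Equiv.swap_inv] at h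
  have e : cyc p q r = Equiv.swap p r * Equiv.swap p q :=
    Equiv.ext fun x => cyc_alt_aux p q r x hpq hpr hqr
  rw [e]
  exact h

lemma two3_aux (a b c d e f : Ω)
    (hcov : ∀ x : Ω, x = a ∨ x = b ∨ x = c ∨ x = d ∨ x = e ∨ x = f)
    (hab : a ≠ b) (hac : a ≠ c) (had : a ≠ d) (hae : a ≠ e) (haf : a ≠ f)
    (hbc : b ≠ c) (hbd : b ≠ d) (hbe : b ≠ e) (hbf : b ≠ f)
    (hcd : c ≠ d) (hce : c ≠ e) (hcf : c ≠ f)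
    (hde : d ≠ e) (hdf : d ≠ f) (hef : e ≠ f) :
    Two3 (cyc a b c * cyc d e f) := by
  have hdisj : (cyc a b c).Disjoint (cyc d e f) := by
    intro x
    rcases hcov x with h|h|h|h|h|h <;> subst h
    · exact Or.inr (cyc_fix _ _ _ _ had hae haf)
    · exact Or.inr (cyc_fix _ _ _ _ hbd hbe hbf)
    · exact Or.inr (cyc_fix _ _ _ _ hcd hce hcf)
    · exact Or.inl (cyc_fix _ _ _ _ had.symm hbd.symm hcd.symm)
    · exact Or.inl (cyc_fix _ _ _ _ hae.symm hbe.symm hce.symm)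
    · exact Or.inl (cyc_fix _ _ _ _ haf.symm hbf.symm hcf.symm)
  have h1 : (cyc a b c).IsThreeCycle := cyc_threeCycle a b c hab hac hbc
  have h2 : (cyc d e f).IsThreeCycle := cyc_threeCycle d e f hde hdf hef
  unfold Two3
  unfold Equiv.Perm.IsThreeCycle at h1 h2
  rw [Equiv.Perm.Disjoint.cycleType_mul hdisj, h1, h2]
  rfl

/-- If `M` and `M′` are both of type (M3), with respect to 3-cycles
`(f₁,f₂,f₃)` of `D` and `(f′₁,f′₂,f′₃)` of the rotation `D′` of the second
triangle, and `g` is the bijection commuting with negation with `g(fᵢ) = f′ᵢ`,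
then `g ∘ M ∘ g⁻¹ ∘ M′ = (M′)²` is a product of two distinct commuting
3-cycles. -/
theorem stmt_13 (D' : Equiv.Perm Ω) (f₁ f₂ f₃ f₁' f₂' f₃' : Ω)
    (M M' g : Equiv.Perm Ω)
    (hc : IsCycleOf D f₁ f₂ f₃) (hc' : IsCycleOf D' f₁' f₂' f₃')
    (hM : M3form M f₁ f₂ f₃) (hM' : M3form M' f₁' f₂' f₃')
    (hg : ∀ x, g (neg x) = neg (g x))
    (h1 : g f₁ = f₁') (h2 : g f₂ = f₂') (h3 : g f₃ = f₃') :
    g * M * g⁻¹ * M' = M' * M' ∧ Two3 (M' * M') := by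
  obtain ⟨Ma, Mb, Mc, Md, Me, Mf⟩ := hM
  obtain ⟨Ma', Mb', Mc', Md', Me', Mf'⟩ := hM'
  have cov := cover_of_cycle f₁ f₂ f₃ hc
  obtain ⟨d12, d13, d23, d1n1, d1n2, d1n3, d2n1, d2n2, d2n3, d3n1, d3n2, d3n3,
    dn12, dn13, dn23⟩ := distinct_of_cycle f₁ f₂ f₃ hc
  have gn1 : g (neg f₁) = neg f₁' := by rw [hg, h1]
  have gn2 : g (neg f₂) = neg f₂' := by rw [hg, h2]
  have gn3 : g (neg f₃) = neg f₃' := by rw [hg, h3]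
  have gi : ∀ a b : Ω, g a = b → g⁻¹ b = a := fun a b h => by
    rw [← h]; exact g.symm_apply_apply a
  have gi1 := gi _ _ h1
  have gi2 := gi _ _ h2
  have gi3 := gi _ _ h3
  have gin1 := gi _ _ gn1
  have gin2 := gi _ _ gn2
  have gin3 := gi _ _ gn3
  have cov' : ∀ x : Ω, x = f₁' ∨ x = f₂' ∨ x = f₃' ∨ x = neg f₁' ∨ x = neg f₂' ∨ x = neg f₃' := by
    intro x
    have hx : g (g⁻¹ x) = x := g.apply_symm_apply x
    rcases cov (g⁻¹ x) with h|h|h|h|h|h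
    · left; rw [← h1, ← h, hx]
    · right; left; rw [← h2, ← h, hx]
    · right; right; left; rw [← h3, ← h, hx]
    · right; right; right; left; rw [← gn1, ← h, hx]
    · right; right; right; right; left; rw [← gn2, ← h, hx]
    · right; right; right; right; right; rw [← gn3, ← h, hx]
  have ne' : ∀ {a b a' b' : Ω}, g a = a' → g b = b' → a ≠ b → a' ≠ b' :=
    fun ha hb hab h => hab (g.injective (by rw [ha, hb, h]))
  have d12' := ne' h1 h2 d12
  have d13' := ne' h1 h3 d13
  have d23' := ne' h2 h3 d23
  have d1n1' := ne' h1 gn1 d1n1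
  have d1n2' := ne' h1 gn2 d1n2
  have d1n3' := ne' h1 gn3 d1n3
  have d2n1' := ne' h2 gn1 d2n1
  have d2n2' := ne' h2 gn2 d2n2
  have d2n3' := ne' h2 gn3 d2n3
  have d3n1' := ne' h3 gn1 d3n1
  have d3n2' := ne' h3 gn2 d3n2
  have d3n3' := ne' h3 gn3 d3n3
  have dn12' := ne' gn1 gn2 dn12
  have dn13' := ne' gn1 gn3 dn13
  have dn23' := ne' gn2 gn3 dn23
  constructor
  · refine Equiv.ext fun x => ?_
    rcases cov' x with h|h|h|h|h|h <;> subst h <;>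
      simp only [Equiv.Perm.mul_apply, Ma', Mb', Mc', Md', Me', Mf',
        gi1, gi2, gi3, gin1, gin2, gin3, Ma, Mb, Mc, Md, Me, Mf,
        gn1, gn2, gn3, h1, h2, h3]
  · have hMM : M' * M' = cyc (neg f₁') f₃' f₂' * cyc (neg f₃') f₁' (neg f₂') := by
      refine Equiv.ext fun x => ?_
      rcases cov' x with h|h|h|h|h|h <;> subst h <;>
        simp only [Equiv.Perm.mul_apply, Ma', Mb', Mc', Md', Me', Mf']
      · rw [cyc_b _ _ _ dn23' d1n2'.symm,
          cyc_fix _ _ _ _ dn12'.symm d3n2'.symm d2n2'.symm]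
      · rw [cyc_fix _ _ _ _ d2n3' d12'.symm d2n2', cyc_c]
      · rw [cyc_fix _ _ _ _ d3n3' d13'.symm d3n2', cyc_b _ _ _ d2n1' d23']
      · rw [cyc_fix _ _ _ _ dn13' d1n1'.symm dn12', cyc_a _ _ _ d3n1'.symm d2n1'.symm]
      · rw [cyc_c, cyc_fix _ _ _ _ dn13'.symm d3n3'.symm d2n3'.symm]
      · rw [cyc_a _ _ _ d1n3'.symm dn23'.symm, cyc_fix _ _ _ _ d1n1' d13' d12']
    rw [hMM]
    exact two3_aux _ _ _ _ _ _
      (fun x => by rcases cov' x with h|h|h|h|h|h <;> tauto)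
      d3n1'.symm d2n1'.symm dn13' d1n1'.symm dn12'
      d23'.symm d3n3' d13'.symm d3n2'
      d2n3' d12'.symm d2n2'
      d1n3'.symm dn23'.symm d1n2'
end

section
/- Let Ω and D be as above and M = (f₁,f₂)(-f₁,-f₂) of type (M7), where (f₁,f₂,f₃) is a 3-cycle of D. Then D∘M has a cycle of length 1 or 2, hence is not a product of two distinct commuting 3-cycles. -/
/-- If `M = (f₁,f₂)(-f₁,-f₂)` is of type (M7) for a 3-cycle `(f₁,f₂,f₃)` of
`D`, then `D ∘ M` has a cycle of length 1 or 2, hence is not a product of two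
distinct commuting 3-cycles. -/
theorem stmt_17 (M : Equiv.Perm Ω) (f₁ f₂ f₃ : Ω)
    (hc : IsCycleOf D f₁ f₂ f₃) (hM : M7form M f₁ f₂ f₃) :
    (∃ x, (D * M) x = x ∨ ((D * M).cycleOf x).support.card = 2) ∧
    ¬ Two3 (D * M) := by
  have hfix : (D * M) f₂ = f₂ := by
    have h1 : M f₂ = f₁ := hM.2.1
    have h2 : D f₁ = f₂ := hc.1
    simp [Equiv.Perm.mul_apply, h1, h2]
  refine ⟨⟨f₂, Or.inl hfix⟩, ?_⟩
  intro h
  have hsum := Equiv.Perm.sum_cycleType (D * M)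
  rw [h] at hsum
  have hmem : f₂ ∉ (D * M).support := by
    simp [Equiv.Perm.mem_support, hfix]
  have hne : (D * M).support ≠ Finset.univ := by
    intro hu
    exact hmem (hu ▸ Finset.mem_univ f₂)
  have hlt : (D * M).support.card < Fintype.card Ω :=
    Finset.card_lt_card (Finset.ssubset_univ_iff.mpr hne)
  have hcard : Fintype.card Ω = 6 := by decide
  have hs : ({3, 3} : Multiset ℕ).sum = 6 := by decide
  omega
end
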